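/- Let V₁ and V₃ be 2×2 complex unitary matrices satisfying V₃·V₁·|0⟩⟨0|·V₁†·V₃† = |0⟩⟨0| and V₃·σx·V₁·|0⟩⟨0|·V₁†·σx·V₃† = |0⟩⟨0|. Then σx·V₁·|0⟩⟨0|·V₁†·σx = V₁·|0⟩⟨0|·V₁†, and consequently V₁·|0⟩⟨0|·V₁† = |+⟩⟨+| or V₁·|0⟩⟨0|·V₁† = |−⟩⟨−|. -/

import Mathlib

open Matrix

noncomputable section

def σx : Matrix (Fin 2) (Fin 2) ℂ := !![0, 1; 1, 0]

/-- The projector |0⟩⟨0|. -/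
def P0 : Matrix (Fin 2) (Fin 2) ℂ := !![1, 0; 0, 0]

/-- The projector |+⟩⟨+|. -/
def Pplus : Matrix (Fin 2) (Fin 2) ℂ := !![1/2, 1/2; 1/2, 1/2]

/-- The projector |−⟩⟨−|. -/
def Pminus : Matrix (Fin 2) (Fin 2) ℂ := !![1/2, -(1/2); -(1/2), 1/2]

theorem winning_strategy_forces_plus_or_minus
    (V₁ V₃ : Matrix (Fin 2) (Fin 2) ℂ)
    (hV₁ : V₁ ∈ Matrix.unitaryGroup (Fin 2) ℂ)
    (hV₃ : V₃ ∈ Matrix.unitaryGroup (Fin 2) ℂ)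
    (h1 : V₃ * V₁ * P0 * V₁ᴴ * V₃ᴴ = P0)
    (h2 : V₃ * σx * V₁ * P0 * V₁ᴴ * σx * V₃ᴴ = P0) :
    σx * V₁ * P0 * V₁ᴴ * σx = V₁ * P0 * V₁ᴴ ∧
    (V₁ * P0 * V₁ᴴ = Pplus ∨ V₁ * P0 * V₁ᴴ = Pminus) := by
  have hV₁l : V₁ᴴ * V₁ = 1 := Matrix.mem_unitaryGroup_iff'.mp hV₁
  have hV₃l : V₃ᴴ * V₃ = 1 := Matrix.mem_unitaryGroup_iff'.mp hV₃
  have hV₃r : V₃ * V₃ᴴ = 1 := Matrix.mem_unitaryGroup_iff.mp hV₃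
  -- first part
  have key : σx * V₁ * P0 * V₁ᴴ * σx = V₁ * P0 * V₁ᴴ := by
    have e1 := congrArg (fun M => V₃ᴴ * M * V₃) h1
    have e2 := congrArg (fun M => V₃ᴴ * M * V₃) h2
    calc σx * V₁ * P0 * V₁ᴴ * σx
        = V₃ᴴ * (V₃ * σx * V₁ * P0 * V₁ᴴ * σx * V₃ᴴ) * V₃ := by
          simp only [Matrix.mul_assoc, ← Matrix.mul_assoc V₃ᴴ V₃, hV₃l, Matrix.one_mul]
          simp [Matrix.mul_assoc, hV₃r]
      _ = V₃ᴴ * P0 * V₃ := by rw [h2]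
      _ = V₃ᴴ * (V₃ * V₁ * P0 * V₁ᴴ * V₃ᴴ) * V₃ := by rw [h1]
      _ = V₁ * P0 * V₁ᴴ := by
          simp only [Matrix.mul_assoc, ← Matrix.mul_assoc V₃ᴴ V₃, hV₃l, Matrix.one_mul]
          simp [Matrix.mul_assoc, hV₃r]
  refine ⟨key, ?_⟩
  set a := V₁ 0 0 with ha
  set c := V₁ 1 0 with hc
  have hρ : V₁ * P0 * V₁ᴴ =
      !![a * star a, a * star c; c * star a, c * star c] := by
    ext i j
    fin_cases i <;> fin_cases j <;>
      simp [Matrix.mul_apply, Fin.sum_univ_two, P0, Matrix.conjTranspose_apply, ha, hc]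
  -- normalization
  have hnorm : star a * a + star c * c = 1 := by
    have := congrFun (congrFun hV₁l 0) 0
    simpa [Matrix.mul_apply, Fin.sum_univ_two, Matrix.conjTranspose_apply, ha, hc] using this
  -- symmetry conditions from `key`
  have hkey' : σx * !![a * star a, a * star c; c * star a, c * star c] * σx =
      !![a * star a, a * star c; c * star a, c * star c] := by
    rw [← hρ]; simpa [Matrix.mul_assoc] using key
  have h00 : c * star c = a * star a := by
    have := congrFun (congrFun hkey' 0) 0
    simpa [Matrix.mul_apply, Fin.sum_univ_two, σx] using this
  have h01 : c * star a = a * star c := by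
    have := congrFun (congrFun hkey' 0) 1
    simpa [Matrix.mul_apply, Fin.sum_univ_two, σx] using this
  have haa : a * star a = 1/2 := by linear_combination hnorm/2 - h00/2
  have hcc : c * star c = 1/2 := by rw [h00, haa]
  have hz2 : (a * star c) * (a * star c) = 1/4 := by
    have h : (a * star c) * (c * star a) = (a * star a) * (c * star c) := by ring
    rw [h01, haa, hcc] at h
    linear_combination h
  have hzcase : a * star c = 1/2 ∨ a * star c = -(1/2) := by
    have h : (a * star c - 1/2) * (a * star c + 1/2) = 0 := by linear_combination hz2
    rcases mul_eq_zero.mp h with h | h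
    · exact Or.inl (sub_eq_zero.mp h)
    · exact Or.inr (by linear_combination h)
  rcases hzcase with h | h
  · left
    have h10 : c * star a = 1/2 := by rw [h01, h]
    rw [hρ, Pplus, haa, hcc, h, h10]
  · right
    have h10 : c * star a = -(1/2) := by rw [h01, h]
    rw [hρ, Pminus, haa, hcc, h, h10]
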